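/- Let n ≥ 4 with neither n nor n−1 prime. Then the diameter of the reduced order super commuting graph Δ^o(S_n)^* is at most 3; that is, for all non-identity x, y ∈ S_n, the distance between x and y in Δ^o(S_n)^* is at most 3. -/

import Mathlib

/-- The power graph of a group `G`: distinct `x, y` are adjacent iff one is a power
of the other, i.e. `x ∈ ⟨y⟩` or `y ∈ ⟨x⟩`. -/
def powerGraph (G : Type*) [Group G] : SimpleGraph G :=
  SimpleGraph.fromRel (fun x y => x ∈ Subgroup.zpowers y)

/-- The enhanced power graph of a group `G`: distinct `x, y` are adjacent iff they lie
in a common cyclic subgroup. -/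
def enhancedPowerGraph (G : Type*) [Group G] : SimpleGraph G :=
  SimpleGraph.fromRel
    (fun x y => ∃ z : G, x ∈ Subgroup.zpowers z ∧ y ∈ Subgroup.zpowers z)

/-- The commuting graph of a group `G`: distinct `x, y` are adjacent iff they commute. -/
def commutingGraph (G : Type*) [Group G] : SimpleGraph G :=
  SimpleGraph.fromRel (fun x y => x * y = y * x)

/-- The order super graph of a graph `A` on a group `G`: distinct `x, y` are adjacent iff
they have the same order, or some elements of the same orders are adjacent in `A`. -/
def orderSuper (G : Type*) [Group G] (A : SimpleGraph G) : SimpleGraph G :=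
  SimpleGraph.fromRel (fun x y =>
    orderOf x = orderOf y ∨
      ∃ x' y' : G, orderOf x' = orderOf x ∧ orderOf y' = orderOf y ∧ A.Adj x' y')

/-- The conjugacy super graph of a graph `A` on a group `G`: distinct `x, y` are adjacent
iff they are conjugate, or some conjugates of them are adjacent in `A`. -/
def conjSuper (G : Type*) [Group G] (A : SimpleGraph G) : SimpleGraph G :=
  SimpleGraph.fromRel (fun x y =>
    IsConj x y ∨ ∃ x' y' : G, IsConj x x' ∧ IsConj y y' ∧ A.Adj x' y')

/-- A vertex of a simple graph is dominant if it is adjacent to every other vertex. -/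
def IsDominantVertex {V : Type*} (Γ : SimpleGraph V) (v : V) : Prop :=
  ∀ w, w ≠ v → Γ.Adj v w

open Equiv Equiv.Perm

section Aux

/-- `Equiv.permCongr` as a `MulEquiv`. -/
def permMulEquiv {α β : Type*} (e : α ≃ β) : Equiv.Perm α ≃* Equiv.Perm β :=
  { e.permCongr with
    map_mul' := fun σ τ => by
      ext b
      simp [Equiv.permCongr_apply] }

lemma orderOf_finRotate' {c : ℕ} (hc : 2 ≤ c) : orderOf (finRotate c) = c := by
  rw [(isCycle_finRotate_of_le hc).orderOf, support_finRotate_of_le hc, Finset.card_univ,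
    Fintype.card_fin]

lemma exists_pair (n c d : ℕ) (hc : 2 ≤ c) (hd : 2 ≤ d) (h : c + d ≤ n) :
    ∃ u v : Equiv.Perm (Fin n), orderOf u = c ∧ orderOf v = d ∧ u ≠ v ∧ u * v = v * u := by
  set r := n - (c + d) with hr
  have h1 : d + r = n - c := by omega
  have h2 : c + (n - c) = n := by omega
  let e : (Fin c ⊕ (Fin d ⊕ Fin r)) ≃ Fin n :=
    (Equiv.sumCongr (Equiv.refl _) (finSumFinEquiv.trans (finCongr h1))).trans
      (finSumFinEquiv.trans (finCongr h2))
  let η := permMulEquiv e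
  let w : Perm (Fin d ⊕ Fin r) := Equiv.Perm.sumCongrHom _ _ (finRotate d, 1)
  let u0 : Perm (Fin c ⊕ (Fin d ⊕ Fin r)) := Equiv.Perm.sumCongrHom _ _ (finRotate c, 1)
  let v0 : Perm (Fin c ⊕ (Fin d ⊕ Fin r)) := Equiv.Perm.sumCongrHom _ _ (1, w)
  have hinl : ∀ (a : Perm (Fin c)) (b : Perm (Fin d ⊕ Fin r)) (z : Fin c),
      (Equiv.Perm.sumCongrHom _ _ (a, b)) (Sum.inl z) = Sum.inl (a z) := by
    intro a b z
    simp [Equiv.Perm.sumCongrHom]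
  have hordu0 : orderOf u0 = c := by
    have := orderOf_injective (Equiv.Perm.sumCongrHom (Fin c) (Fin d ⊕ Fin r))
      Equiv.Perm.sumCongrHom_injective (finRotate c, 1)
    rw [show u0 = _ from rfl, this]
    have h2 := orderOf_injective (MonoidHom.inl (Perm (Fin c)) (Perm (Fin d ⊕ Fin r)))
      (fun x y hxy => by simpa using congrArg Prod.fst hxy) (finRotate c)
    simpa [MonoidHom.inl, orderOf_finRotate' hc] using h2
  have hordw : orderOf w = d := by
    have := orderOf_injective (Equiv.Perm.sumCongrHom (Fin d) (Fin r))
      Equiv.Perm.sumCongrHom_injective (finRotate d, 1)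
    rw [show w = _ from rfl, this]
    have h2 := orderOf_injective (MonoidHom.inl (Perm (Fin d)) (Perm (Fin r)))
      (fun x y hxy => by simpa using congrArg Prod.fst hxy) (finRotate d)
    simpa [MonoidHom.inl, orderOf_finRotate' hd] using h2
  have hordv0 : orderOf v0 = d := by
    have := orderOf_injective (Equiv.Perm.sumCongrHom (Fin c) (Fin d ⊕ Fin r))
      Equiv.Perm.sumCongrHom_injective (1, w)
    rw [show v0 = _ from rfl, this]
    have h2 := orderOf_injective (MonoidHom.inr (Perm (Fin c)) (Perm (Fin d ⊕ Fin r)))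
      (fun x y hxy => by simpa using congrArg Prod.snd hxy) w
    simpa [MonoidHom.inr, hordw] using h2
  have hmove : ∀ z : Fin c, finRotate c z ≠ z := fun z =>
    Equiv.Perm.mem_support.mp (by rw [support_finRotate_of_le hc]; exact Finset.mem_univ z)
  have hne : u0 ≠ v0 := by
    intro heq
    have hz : (0 : ℕ) < c := by omega
    have h0 : u0 (Sum.inl ⟨0, hz⟩) = v0 (Sum.inl ⟨0, hz⟩) := by rw [heq]
    rw [hinl, hinl] at h0
    simp only [Equiv.Perm.coe_one, id_eq, Sum.inl.injEq] at h0
    exact hmove _ h0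
  have hcomm : u0 * v0 = v0 * u0 := by
    have hprod : ((finRotate c, (1 : Perm (Fin d ⊕ Fin r))) : Perm (Fin c) × Perm (Fin d ⊕ Fin r)) * (1, w)
        = ((1, w) : Perm (Fin c) × Perm (Fin d ⊕ Fin r)) * (finRotate c, 1) := by
      simp [Prod.mk_mul_mk]
    show Equiv.Perm.sumCongrHom _ _ _ * Equiv.Perm.sumCongrHom _ _ _
        = Equiv.Perm.sumCongrHom _ _ _ * Equiv.Perm.sumCongrHom _ _ _
    rw [← map_mul, ← map_mul, hprod]
  exact ⟨η u0, η v0,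
    (orderOf_injective η.toMonoidHom η.injective u0).trans hordu0,
    (orderOf_injective η.toMonoidHom η.injective v0).trans hordv0,
    fun hh => hne (η.injective hh),
    (map_mul η u0 v0).symm.trans ((congrArg η hcomm).trans (map_mul η v0 u0))⟩

end Aux

section Aux2

lemma pow_dvd_lcm_multiset {p k : ℕ} (hp : p.Prime) (hk : 1 ≤ k) (s : Multiset ℕ)
    (h : p ^ k ∣ s.lcm) : ∃ ℓ ∈ s, p ^ k ∣ ℓ := by
  induction s using Multiset.induction_on with
  | empty =>
    exfalso
    rw [Multiset.lcm_zero] at h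
    have h1 := Nat.le_of_dvd one_pos h
    have h2 : p ≤ p ^ k := Nat.le_self_pow (by omega) p
    have := hp.two_le
    omega
  | cons a s ih =>
    rw [Multiset.lcm_cons, lcm_eq_nat_lcm] at h
    by_cases ha : a = 0
    · exact ⟨a, Multiset.mem_cons_self a s, by rw [ha]; exact dvd_zero _⟩
    by_cases hs : s.lcm = 0
    · obtain ⟨ℓ, hℓ, hdℓ⟩ := ih (by rw [hs]; exact dvd_zero _)
      exact ⟨ℓ, Multiset.mem_cons_of_mem hℓ, hdℓ⟩
    have hlcm : Nat.lcm a s.lcm ≠ 0 := Nat.lcm_ne_zero ha hs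
    have hle := (Nat.Prime.pow_dvd_iff_le_factorization hp hlcm).mp h
    rw [Nat.factorization_lcm ha hs] at hle
    rw [Finsupp.sup_apply] at hle
    rcases le_max_iff.mp hle with hle | hle
    · exact ⟨a, Multiset.mem_cons_self a s,
        (Nat.Prime.pow_dvd_iff_le_factorization hp ha).mpr hle⟩
    · obtain ⟨ℓ, hℓ, hdℓ⟩ := ih ((Nat.Prime.pow_dvd_iff_le_factorization hp hs).mpr hle)
      exact ⟨ℓ, Multiset.mem_cons_of_mem hℓ, hdℓ⟩

lemma exists_cycleLength {n : ℕ} (x : Equiv.Perm (Fin n)) {p k : ℕ} (hp : p.Prime)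
    (hk : 1 ≤ k) (hdvd : p ^ k ∣ orderOf x) : ∃ ℓ ∈ x.cycleType, p ^ k ∣ ℓ := by
  rw [← Equiv.Perm.lcm_cycleType] at hdvd
  exact pow_dvd_lcm_multiset hp hk _ hdvd

lemma mem_cycleType_le {n : ℕ} {x : Equiv.Perm (Fin n)} {ℓ : ℕ} (h : ℓ ∈ x.cycleType) :
    ℓ ≤ n := by
  have h1 : ℓ ≤ x.cycleType.sum := Multiset.single_le_sum (fun y _ => Nat.zero_le y) _ h
  rw [Equiv.Perm.sum_cycleType] at h1
  exact h1.trans (le_trans (Finset.card_le_univ _) (by simp))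

lemma two_mem_cycleType_le {n : ℕ} {x : Equiv.Perm (Fin n)} {ℓ₁ ℓ₂ : ℕ}
    (h1 : ℓ₁ ∈ x.cycleType) (h2 : ℓ₂ ∈ x.cycleType) (hne : ℓ₁ ≠ ℓ₂) : ℓ₁ + ℓ₂ ≤ n := by
  have h2' : ℓ₂ ∈ x.cycleType.erase ℓ₁ := (Multiset.mem_erase_of_ne hne.symm).mpr h2
  have hsum : ℓ₁ + (x.cycleType.erase ℓ₁).sum = x.cycleType.sum := by
    rw [← Multiset.sum_cons, Multiset.cons_erase h1]
  have h3 : ℓ₂ ≤ (x.cycleType.erase ℓ₁).sum :=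
    Multiset.single_le_sum (fun y _ => Nat.zero_le y) _ h2'
  have h4 : x.cycleType.sum ≤ n := by
    rw [Equiv.Perm.sum_cycleType]
    exact le_trans (Finset.card_le_univ _) (by simp)
  omega

lemma pow_order_div {G : Type*} [Group G] [Fintype G] {x : G} {m : ℕ}
    (hm : m ∣ orderOf x) (h0 : orderOf x ≠ 0) : orderOf (x ^ (orderOf x / m)) = m := by
  rw [orderOf_pow, Nat.gcd_comm, Nat.gcd_eq_left (Nat.div_dvd_of_dvd hm),
    Nat.div_div_self hm h0]

end Aux2

section Anchor

/-- Anchor: every nontrivial permutation's order is linked (via a commuting pair or equality)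
to a "central" order: 2 or a small odd prime power. -/
lemma anchor {n : ℕ} (hn : 9 ≤ n) (h1 : ¬ n.Prime) (h2 : ¬ (n - 1).Prime)
    (x : Equiv.Perm (Fin n)) (hx : x ≠ 1) :
    ∃ c, (c = 2 ∨ (Odd c ∧ IsPrimePow c ∧ 2 * c ≤ n - 1)) ∧
      (orderOf x = c ∨ (orderOf x ≠ c ∧ ∃ u v : Equiv.Perm (Fin n),
        orderOf u = orderOf x ∧ orderOf v = c ∧ u ≠ v ∧ u * v = v * u)) := by
  have ha0 : orderOf x ≠ 0 := (orderOf_pos x).ne'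
  have ha1 : orderOf x ≠ 1 := fun h => hx (orderOf_eq_one_iff.mp h)
  by_cases hev : 2 ∣ orderOf x
  · refine ⟨2, Or.inl rfl, ?_⟩
    by_cases ha2 : orderOf x = 2
    · exact Or.inl ha2
    · have hord2 : orderOf (x ^ (orderOf x / 2)) = 2 := pow_order_div hev ha0
      refine Or.inr ⟨ha2, x, x ^ (orderOf x / 2), rfl, hord2, ?_, (Commute.refl x).pow_right _⟩
      intro heq
      rw [← heq] at hord2
      exact ha2 hord2
  · -- odd order
    have hodd : Odd (orderOf x) := Nat.odd_iff.mpr (by omega)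
    have ha3 : 3 ≤ orderOf x := by
      have := Nat.odd_iff.mp hodd
      omega
    by_cases hpp : IsPrimePow (orderOf x)
    · by_cases hsm : 2 * orderOf x ≤ n - 1
      · exact ⟨orderOf x, Or.inr ⟨hodd, hpp, hsm⟩, Or.inl rfl⟩
      · by_cases hfit : orderOf x + 2 ≤ n
        · obtain ⟨u, v, hu, hv, huv, hcomm⟩ :=
            exists_pair n (orderOf x) 2 (by omega) le_rfl hfit
          exact ⟨2, Or.inl rfl, Or.inr ⟨by omega, u, v, hu, hv, huv, hcomm⟩⟩
        · -- orderOf x = n - 1 or n, a proper prime power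
          obtain ⟨p, k, hp, hk, hak⟩ := hpp
          have hpn : p.Prime := Nat.prime_iff.mpr hp
          obtain ⟨ℓ, hl, hdl⟩ := exists_cycleLength x hpn hk (hak ▸ dvd_rfl)
          have hlle : ℓ ≤ n := mem_cycleType_le hl
          have hl2 : 2 ≤ ℓ := Equiv.Perm.two_le_of_mem_cycleType hl
          have haln : orderOf x ≤ n :=
            le_trans (Nat.le_of_dvd (by omega) (hak ▸ hdl)) hlle
          have hnp : ¬ (orderOf x).Prime := by
            rcases (by omega : orderOf x = n - 1 ∨ orderOf x = n) with h | h
            · rw [h]; exact h2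
            · rw [h]; exact h1
          have hpdvd : p ∣ orderOf x := hak ▸ dvd_pow_self p hk.ne'
          have hk2 : 2 ≤ k := by
            by_contra hcon
            have : k = 1 := by omega
            rw [this, pow_one] at hak
            exact hnp (hak ▸ hpn)
          have hpodd : ¬ 2 ∣ p := fun h => hev (h.trans hpdvd)
          have hp3 : 3 ≤ p := by have := hpn.two_le; omega
          set c := p ^ (k - 1) with hc
          have hpc : c * p = orderOf x := by
            rw [← hak, ← pow_succ]
            congr 1
            omega
          have hc1 : 1 ≤ c := Nat.one_le_iff_ne_zero.mpr (pow_ne_zero _ (by omega))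
          have h3c : 3 * c ≤ orderOf x := by
            calc 3 * c ≤ p * c := Nat.mul_le_mul_right c hp3
            _ = orderOf x := by rw [mul_comm]; exact hpc
          have hcd : c ∣ orderOf x := ⟨p, hpc.symm ▸ rfl⟩
          have hordc : orderOf (x ^ (orderOf x / c)) = c := pow_order_div hcd ha0
          refine ⟨c, Or.inr ⟨(Nat.odd_iff.mpr (by omega)).pow, ⟨p, k - 1, hp, by omega, rfl⟩,
            by omega⟩, Or.inr ⟨by omega, x, x ^ (orderOf x / c), rfl, hordc, ?_,
            (Commute.refl x).pow_right _⟩⟩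
          intro heq
          rw [← heq] at hordc
          omega
    · -- not a prime power: find a small prime-power part
      have key : ∃ r, r.Prime ∧ r ∣ orderOf x ∧
          2 * r ^ ((orderOf x).factorization r) ≤ n - 1 := by
        by_contra hcon
        push_neg at hcon
        set p := (orderOf x).minFac with hpdef
        have hpp' : p.Prime := Nat.minFac_prime ha1
        have hpd : p ∣ orderOf x := Nat.minFac_dvd _
        have hvp : 0 < (orderOf x).factorization p :=
          hpp'.factorization_pos_of_dvd ha0 hpd
        set P := p ^ (orderOf x).factorization p with hP
        have hPd : P ∣ orderOf x := Nat.ordProj_dvd _ p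
        have hQne : orderOf x / P ≠ 1 := by
          intro h
          apply hpp
          have := Nat.ordProj_mul_ordCompl_eq_self (orderOf x) p
          rw [show ordCompl[p] (orderOf x) = orderOf x / P from rfl, h, mul_one] at this
          exact ⟨p, (orderOf x).factorization p, hpp'.prime, hvp, this⟩
        obtain ⟨q, hq, hqd⟩ := Nat.exists_prime_and_dvd hQne
        have hqa : q ∣ orderOf x := hqd.trans (Nat.div_dvd_of_dvd hPd)
        have hqp : q ≠ p := by
          intro h
          rw [h] at hqd
          exact Nat.not_dvd_ordCompl hpp' ha0 hqd
        have hvq : 0 < (orderOf x).factorization q := hq.factorization_pos_of_dvd ha0 hqa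
        set Q := q ^ (orderOf x).factorization q with hQ
        have hQd : Q ∣ orderOf x := Nat.ordProj_dvd _ q
        have hPbig : n - 1 < 2 * P := hcon p hpp' hpd
        have hQbig : n - 1 < 2 * Q := hcon q hq hqa
        have hpodd : ¬ 2 ∣ p := fun h => hev (h.trans hpd)
        have hp3 : 3 ≤ p := by have := hpp'.two_le; omega
        have hP3 : 3 ≤ P := le_trans hp3 (Nat.le_self_pow hvp.ne' p)
        obtain ⟨ℓ1, hl1, hdl1⟩ := exists_cycleLength x hpp' hvp hPd
        have hl1n : ℓ1 ≤ n := mem_cycleType_le hl1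
        have hl12 : 2 ≤ ℓ1 := Equiv.Perm.two_le_of_mem_cycleType hl1
        by_cases hQl : Q ∣ ℓ1
        · have hcop : Nat.Coprime P Q :=
            ((Nat.coprime_primes hpp' hq).mpr (Ne.symm hqp)).pow _ _
          have hmul : P * Q ∣ ℓ1 := hcop.mul_dvd_of_dvd_of_dvd hdl1 hQl
          have hPQn : P * Q ≤ n := le_trans (Nat.le_of_dvd (by omega) hmul) hl1n
          have h3Q : 3 * Q ≤ P * Q := Nat.mul_le_mul_right Q hP3
          omega
        · obtain ⟨ℓ2, hl2, hdl2⟩ := exists_cycleLength x hq hvq hQd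
          have hne : ℓ1 ≠ ℓ2 := fun h => hQl (h ▸ hdl2)
          have hsum : ℓ1 + ℓ2 ≤ n := two_mem_cycleType_le hl1 hl2 hne
          have hl22 : 2 ≤ ℓ2 := Equiv.Perm.two_le_of_mem_cycleType hl2
          have hPl : P ≤ ℓ1 := Nat.le_of_dvd (by omega) hdl1
          have hQl2 : Q ≤ ℓ2 := Nat.le_of_dvd (by omega) hdl2
          have hPQ : P ≠ Q := by
            intro h
            have hpq : p ∣ Q := h ▸ dvd_pow_self p hvp.ne'
            exact hqp ((Nat.prime_dvd_prime_iff_eq hpp' hq).mp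
              (hpp'.dvd_of_dvd_pow hpq)).symm
          omega
      obtain ⟨r, hr, hrd, hrb⟩ := key
      have hvr : 0 < (orderOf x).factorization r := hr.factorization_pos_of_dvd ha0 hrd
      set R := r ^ (orderOf x).factorization r with hR
      have hRd : R ∣ orderOf x := Nat.ordProj_dvd _ r
      have hrodd : ¬ 2 ∣ r := fun h => hev (h.trans hrd)
      have hRodd : Odd R := (Nat.odd_iff.mpr (by have := hr.two_le; omega)).pow
      have haR : orderOf x ≠ R := by
        intro h
        exact hpp ⟨r, (orderOf x).factorization r, hr.prime, hvr, h.symm⟩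
      have hordR : orderOf (x ^ (orderOf x / R)) = R := pow_order_div hRd ha0
      exact ⟨R, Or.inr ⟨hRodd, ⟨r, (orderOf x).factorization r, hr.prime, hvr, rfl⟩, hrb⟩,
        Or.inr ⟨haR, x, x ^ (orderOf x / R), rfl, hordR, fun heq => haR ((congrArg orderOf heq).trans hordR),
          (Commute.refl x).pow_right _⟩⟩

end Anchor


section Main

variable {n : ℕ}

lemma C_two_le {c : ℕ} (h : c = 2 ∨ (Odd c ∧ IsPrimePow c ∧ 2 * c ≤ n - 1)) : 2 ≤ c := by
  rcases h with rfl | ⟨_, h, _⟩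
  · omega
  · exact h.two_le

lemma C_sum (hn : 9 ≤ n) {c d : ℕ} (hc : c = 2 ∨ (Odd c ∧ IsPrimePow c ∧ 2 * c ≤ n - 1))
    (hd : d = 2 ∨ (Odd d ∧ IsPrimePow d ∧ 2 * d ≤ n - 1)) (hcd : c ≠ d) : c + d ≤ n := by
  rcases hc with rfl | ⟨ho, hp, hb⟩ <;> rcases hd with rfl | ⟨ho', hp', hb'⟩
  · omega
  · have := hp'.two_le
    have := Nat.odd_iff.mp ho'
    omega
  · have := hp.two_le
    have := Nat.odd_iff.mp ho
    omega
  · omega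

lemma ne_of_orderOf_ne {G : Type*} [Group G] {s t : G} (h : orderOf s ≠ orderOf t) :
    s ≠ t := fun e => h (congrArg orderOf e)

lemma ne_one_of_orderOf {G : Type*} [Group G] {s : G} {c : ℕ} (h : orderOf s = c)
    (hc : 2 ≤ c) : s ≠ 1 := by
  intro h1
  rw [h1, orderOf_one] at h
  omega

lemma gadj {s t : Equiv.Perm (Fin n)} (hst : s ≠ t)
    (h : orderOf s = orderOf t ∨ (∃ u v : Equiv.Perm (Fin n),
      orderOf u = orderOf s ∧ orderOf v = orderOf t ∧ u ≠ v ∧ u * v = v * u)) :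
    (orderSuper (Equiv.Perm (Fin n)) (commutingGraph (Equiv.Perm (Fin n)))).Adj s t := by
  rw [orderSuper, SimpleGraph.fromRel_adj]
  refine ⟨hst, Or.inl ?_⟩
  rcases h with h | ⟨u, v, hu, hv, huv, hcm⟩
  · exact Or.inl h
  · refine Or.inr ⟨u, v, hu, hv, ?_⟩
    rw [commutingGraph, SimpleGraph.fromRel_adj]
    exact ⟨huv, Or.inl hcm⟩

lemma iadj {s t : Equiv.Perm (Fin n)} (hs : s ≠ 1) (ht : t ≠ 1)
    (h : (orderSuper (Equiv.Perm (Fin n)) (commutingGraph (Equiv.Perm (Fin n)))).Adj s t) :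
    (SimpleGraph.induce {σ : Equiv.Perm (Fin n) | σ ≠ 1}
      (orderSuper (Equiv.Perm (Fin n)) (commutingGraph (Equiv.Perm (Fin n))))).Adj
      ⟨s, hs⟩ ⟨t, ht⟩ := h

end Main


/-- For `n ≥ 4` with neither `n` nor `n - 1` prime, the reduced order super commuting
graph of `S_n` has diameter at most `3`. -/
theorem reduced_orderSuper_commutingGraph_symmetricGroup_diam_le_three
    (n : ℕ) (hn : 4 ≤ n) (h1 : ¬ n.Prime) (h2 : ¬ (n - 1).Prime)
    (x y : Equiv.Perm (Fin n)) (hx : x ≠ 1) (hy : y ≠ 1) :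
    (SimpleGraph.induce {σ : Equiv.Perm (Fin n) | σ ≠ 1}
      (orderSuper (Equiv.Perm (Fin n))
        (commutingGraph (Equiv.Perm (Fin n))))).dist ⟨x, hx⟩ ⟨y, hy⟩ ≤ 3 := by
  have hn9 : 9 ≤ n := by
    by_contra hcon
    push_neg at hcon
    interval_cases n <;> simp_all <;> norm_num at *
  by_cases hxy : x = y
  · subst hxy
    rw [show (⟨x, hx⟩ : {σ : Equiv.Perm (Fin n) | σ ≠ 1}) = ⟨x, hy⟩ from rfl]
    rw [SimpleGraph.dist_self]
    omega
  by_cases hab : orderOf x = orderOf y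
  · have hadj := iadj hx hy (gadj hxy (Or.inl hab))
    have := SimpleGraph.dist_le (SimpleGraph.Walk.cons hadj SimpleGraph.Walk.nil)
    exact le_trans this (by simp)
  · obtain ⟨c1, hC1, H1⟩ := anchor hn9 h1 h2 x hx
    obtain ⟨c2, hC2, H2⟩ := anchor hn9 h1 h2 y hy
    have hCle1 : 2 ≤ c1 := C_two_le hC1
    have hCle2 : 2 ≤ c2 := C_two_le hC2
    by_cases hcc : c1 = c2
    · subst hcc
      rcases H1 with h1e | ⟨hne1, u1, v1, hu1, hv1, hne1', hcm1⟩
      · rcases H2 with h2e | ⟨hne2, u2, v2, hu2, hv2, hne2', hcm2⟩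
        · exact absurd (h1e.trans h2e.symm) hab
        · have hadj := iadj hx hy (gadj hxy
            (Or.inr ⟨v2, u2, hv2.trans h1e.symm, hu2, hne2'.symm, hcm2.symm⟩))
          have := SimpleGraph.dist_le (SimpleGraph.Walk.cons hadj SimpleGraph.Walk.nil)
          exact le_trans this (by simp)
      · rcases H2 with h2e | ⟨hne2, u2, v2, hu2, hv2, hne2', hcm2⟩
        · have hadj := iadj hx hy (gadj hxy
            (Or.inr ⟨u1, v1, hu1, hv1.trans h2e.symm, hne1', hcm1⟩))
          have := SimpleGraph.dist_le (SimpleGraph.Walk.cons hadj SimpleGraph.Walk.nil)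
          exact le_trans this (by simp)
        · have hv1ne1 : v1 ≠ 1 := ne_one_of_orderOf hv1 hCle1
          have hA : _ := iadj hx hv1ne1 (gadj
            (ne_of_orderOf_ne (by rw [hv1]; exact hne1))
            (Or.inr ⟨u1, v1, hu1, rfl, hne1', hcm1⟩))
          have hB : _ := iadj hv1ne1 hy (gadj
            (ne_of_orderOf_ne (by rw [hv1]; exact fun h => hne2 h.symm))
            (Or.inr ⟨v2, u2, hv2.trans hv1.symm, hu2, hne2'.symm, hcm2.symm⟩))
          have := SimpleGraph.dist_le
            (SimpleGraph.Walk.cons hA (SimpleGraph.Walk.cons hB SimpleGraph.Walk.nil))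
          exact le_trans this (by simp)
    · have hsum : c1 + c2 ≤ n := C_sum hn9 hC1 hC2 hcc
      obtain ⟨m1, m2, hm1, hm2, hmne, hmcm⟩ := exists_pair n c1 c2 hCle1 hCle2 hsum
      have hm1ne1 : m1 ≠ 1 := ne_one_of_orderOf hm1 hCle1
      have hm2ne1 : m2 ≠ 1 := ne_one_of_orderOf hm2 hCle2
      rcases H1 with h1e | ⟨hne1, u1, v1, hu1, hv1, hne1', hcm1⟩
      · rcases H2 with h2e | ⟨hne2, u2, v2, hu2, hv2, hne2', hcm2⟩
        · have hadj := iadj hx hy (gadj hxy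
            (Or.inr ⟨m1, m2, hm1.trans h1e.symm, hm2.trans h2e.symm, hmne, hmcm⟩))
          have := SimpleGraph.dist_le (SimpleGraph.Walk.cons hadj SimpleGraph.Walk.nil)
          exact le_trans this (by simp)
        · have hA : _ := iadj hx hm2ne1 (gadj
            (ne_of_orderOf_ne (by rw [h1e, hm2]; exact hcc))
            (Or.inr ⟨m1, m2, hm1.trans h1e.symm, rfl, hmne, hmcm⟩))
          have hB : _ := iadj hm2ne1 hy (gadj
            (ne_of_orderOf_ne (by rw [hm2]; exact fun h => hne2 h.symm))
            (Or.inr ⟨v2, u2, hv2.trans hm2.symm, hu2, hne2'.symm, hcm2.symm⟩))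
          have := SimpleGraph.dist_le
            (SimpleGraph.Walk.cons hA (SimpleGraph.Walk.cons hB SimpleGraph.Walk.nil))
          exact le_trans this (by simp)
      · rcases H2 with h2e | ⟨hne2, u2, v2, hu2, hv2, hne2', hcm2⟩
        · have hA : _ := iadj hx hm1ne1 (gadj
            (ne_of_orderOf_ne (by rw [hm1]; exact hne1))
            (Or.inr ⟨u1, v1, hu1, hv1.trans hm1.symm, hne1', hcm1⟩))
          have hB : _ := iadj hm1ne1 hy (gadj
            (ne_of_orderOf_ne (by rw [hm1, h2e]; exact hcc))
            (Or.inr ⟨m1, m2, rfl, hm2.trans h2e.symm, hmne, hmcm⟩))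
          have := SimpleGraph.dist_le
            (SimpleGraph.Walk.cons hA (SimpleGraph.Walk.cons hB SimpleGraph.Walk.nil))
          exact le_trans this (by simp)
        · have hA : _ := iadj hx hm1ne1 (gadj
            (ne_of_orderOf_ne (by rw [hm1]; exact hne1))
            (Or.inr ⟨u1, v1, hu1, hv1.trans hm1.symm, hne1', hcm1⟩))
          have hB : _ := iadj hm1ne1 hm2ne1 (gadj hmne
            (Or.inr ⟨m1, m2, rfl, rfl, hmne, hmcm⟩))
          have hC : _ := iadj hm2ne1 hy (gadj
            (ne_of_orderOf_ne (by rw [hm2]; exact fun h => hne2 h.symm))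
            (Or.inr ⟨v2, u2, hv2.trans hm2.symm, hu2, hne2'.symm, hcm2.symm⟩))
          have := SimpleGraph.dist_le (SimpleGraph.Walk.cons hA
            (SimpleGraph.Walk.cons hB (SimpleGraph.Walk.cons hC SimpleGraph.Walk.nil)))
          exact le_trans this (by simp)
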